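/- For every bounded set H ⊆ ℝ² there exists a function f : H → Bool such that for every point x ∈ ℝ² that is an accumulation point of H and every ε > 0, the open ball of radius ε around x contains infinitely many points q ∈ H with f(q) = true and infinitely many points r ∈ H with f(r) = false. -/

import Mathlib

open Classical in
/-- Diagonal picking sequence: at step `m`, pick a fresh point of `T (m.unpair).1`
avoiding `p₀` and all previously picked points, if possible. -/
noncomputable def pickSeq {α : Type} (T : ℕ → Set α) (p₀ : α) (m : ℕ) : α :=
  if h : (T (Nat.unpair m).1 \
      insert p₀ {x | ∃ k, ∃ _ : k < m, pickSeq T p₀ k = x}).Nonempty then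
    h.choose
  else p₀
decreasing_by all_goals assumption

theorem pickSeq_spec {α : Type} (T : ℕ → Set α) (p₀ : α) (m : ℕ)
    (h : (T (Nat.unpair m).1).Infinite) :
    pickSeq T p₀ m ∈ T (Nat.unpair m).1 ∧ pickSeq T p₀ m ≠ p₀ ∧
      ∀ k < m, pickSeq T p₀ m ≠ pickSeq T p₀ k := by
  classical
  have hfin : ({x | ∃ k, ∃ _ : k < m, pickSeq T p₀ k = x} : Set α).Finite := by
    apply ((Set.finite_Iio m).image (pickSeq T p₀)).subset
    rintro x ⟨k, hk, hx⟩
    exact ⟨k, hk, hx⟩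
  have hne : (T (Nat.unpair m).1 \
      insert p₀ {x | ∃ k, ∃ _ : k < m, pickSeq T p₀ k = x}).Nonempty :=
    (h.diff (hfin.insert p₀)).nonempty
  have hdef : pickSeq T p₀ m = hne.choose := by
    rw [pickSeq]; exact dif_pos hne
  have hc := hne.choose_spec
  rw [← hdef] at hc
  obtain ⟨hmem, hnot⟩ := hc
  refine ⟨hmem, ?_, ?_⟩
  · intro h0; exact hnot (Set.mem_insert_iff.mpr (Or.inl h0))
  · intro k hk hkeq
    exact hnot (Set.mem_insert_iff.mpr (Or.inr ⟨k, hk, hkeq.symm⟩))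

theorem pickSeq_injOn {α : Type} (T : ℕ → Set α) (p₀ : α) {m m' : ℕ}
    (hm : (T (Nat.unpair m).1).Infinite) (hm' : (T (Nat.unpair m').1).Infinite)
    (heq : pickSeq T p₀ m = pickSeq T p₀ m') : m = m' := by
  rcases lt_trichotomy m m' with h | h | h
  · exact absurd heq.symm ((pickSeq_spec T p₀ m' hm').2.2 m h)
  · exact h
  · exact absurd heq ((pickSeq_spec T p₀ m hm).2.2 m' h)

/-- Countable version: a coloring making every infinite `T n` contain infinitely many
points of each color. -/
theorem exists_coloring {α : Type} (p₀ : α) (T : ℕ → Set α) :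
    ∃ f : α → Bool, ∀ n, (T n).Infinite →
      {q ∈ T n | f q = true}.Infinite ∧ {q ∈ T n | f q = false}.Infinite := by
  classical
  set g := pickSeq T p₀ with hg
  refine ⟨fun q => if ∃ m, (T (Nat.unpair m).1).Infinite ∧ Even (Nat.unpair m).2 ∧ g m = q
      then true else false, ?_⟩
  intro n hn
  constructor
  · refine Set.infinite_of_injective_forall_mem
      (f := fun k : ℕ => g (Nat.pair n (2 * k))) ?_ ?_
    · intro k k' hkk'
      have h1 : (T (Nat.unpair (Nat.pair n (2 * k))).1).Infinite := by
        rw [Nat.unpair_pair]; exact hn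
      have h2 : (T (Nat.unpair (Nat.pair n (2 * k'))).1).Infinite := by
        rw [Nat.unpair_pair]; exact hn
      have := pickSeq_injOn T p₀ h1 h2 hkk'
      have := congrArg (fun m => (Nat.unpair m).2) this
      simpa using this
    · intro k
      have h1 : (T (Nat.unpair (Nat.pair n (2 * k))).1).Infinite := by
        rw [Nat.unpair_pair]; exact hn
      have hmem := (pickSeq_spec T p₀ (Nat.pair n (2 * k)) h1).1
      rw [Nat.unpair_pair] at hmem
      refine ⟨hmem, ?_⟩
      dsimp only
      rw [if_pos]
      exact ⟨Nat.pair n (2 * k), h1, by rw [Nat.unpair_pair]; exact ⟨k, (two_mul k).symm ▸ rfl⟩, rfl⟩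
  · refine Set.infinite_of_injective_forall_mem
      (f := fun k : ℕ => g (Nat.pair n (2 * k + 1))) ?_ ?_
    · intro k k' hkk'
      have h1 : (T (Nat.unpair (Nat.pair n (2 * k + 1))).1).Infinite := by
        rw [Nat.unpair_pair]; exact hn
      have h2 : (T (Nat.unpair (Nat.pair n (2 * k' + 1))).1).Infinite := by
        rw [Nat.unpair_pair]; exact hn
      have := pickSeq_injOn T p₀ h1 h2 hkk'
      have := congrArg (fun m => (Nat.unpair m).2) this
      simp only [Nat.unpair_pair] at this
      omega
    · intro k
      have h1 : (T (Nat.unpair (Nat.pair n (2 * k + 1))).1).Infinite := by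
        rw [Nat.unpair_pair]; exact hn
      have hmem := (pickSeq_spec T p₀ (Nat.pair n (2 * k + 1)) h1).1
      rw [Nat.unpair_pair] at hmem
      refine ⟨hmem, ?_⟩
      dsimp only
      rw [if_neg]
      rintro ⟨m, hminf, hmeven, hmeq⟩
      have := pickSeq_injOn T p₀ hminf h1 hmeq
      subst this
      rw [Nat.unpair_pair] at hmeven
      obtain ⟨r, hr⟩ := hmeven
      omega

/-- Accumulation points have infinitely many points of the set in every neighborhood. -/
theorem acc_inter_infinite {X : Type} [TopologicalSpace X] [T1Space X] {H : Set X} {x : X}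
    (hacc : ∀ U ∈ nhds x, ∃ q ∈ H, q ≠ x ∧ q ∈ U) {U : Set X} (hU : U ∈ nhds x) :
    (H ∩ U).Infinite := by
  intro hfin
  set F := (H ∩ U) \ {x} with hF
  have hFfin : F.Finite := hfin.diff
  have hxF : x ∉ F := fun h => h.2 rfl
  have hV : U \ F ∈ nhds x := by
    rw [Set.diff_eq]
    exact Filter.inter_mem hU (hFfin.isClosed.isOpen_compl.mem_nhds hxF)
  obtain ⟨q, hqH, hqx, hqV⟩ := hacc _ hV
  exact hqV.2 ⟨⟨hqH, hqV.1⟩, hqx⟩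

/-- Every bounded set `H ⊆ ℝ²` admits a two-coloring such that around
every accumulation point of `H`, every open ball contains infinitely many points of `H`
of each color. -/
theorem bounded_planar_set_accumulation_coloring
    (H : Set (ℝ × ℝ)) (hH : Bornology.IsBounded H) :
    ∃ f : ℝ × ℝ → Bool,
      ∀ x : ℝ × ℝ, (∀ U ∈ nhds x, ∃ q ∈ H, q ≠ x ∧ q ∈ U) →
        ∀ ε : ℝ, 0 < ε →
          {q ∈ H ∩ Metric.ball x ε | f q = true}.Infinite ∧
          {q ∈ H ∩ Metric.ball x ε | f q = false}.Infinite := by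
  classical
  -- enumerate rational balls
  set c : ℚ × ℚ × ℚ → ℝ × ℝ := fun t => ((t.1 : ℝ), (t.2.1 : ℝ)) with hc
  obtain ⟨e, he⟩ := exists_surjective_nat (ℚ × ℚ × ℚ)
  set T : ℕ → Set (ℝ × ℝ) := fun n =>
    H ∩ Metric.ball (c (e n)) ((e n).2.2 : ℝ) with hT
  obtain ⟨f, hf⟩ := exists_coloring ((0, 0) : ℝ × ℝ) T
  refine ⟨f, ?_⟩
  intro x hacc ε hε
  -- find a rational ball between x and ball x ε
  obtain ⟨a, ha1, ha2⟩ := exists_rat_btwn (show x.1 - ε / 4 < x.1 by linarith)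
  obtain ⟨b, hb1, hb2⟩ := exists_rat_btwn (show x.2 - ε / 4 < x.2 by linarith)
  obtain ⟨ρ, hρ1, hρ2⟩ := exists_rat_btwn (show ε / 4 < ε / 2 by linarith)
  set t : ℚ × ℚ × ℚ := (a, b, ρ) with ht
  obtain ⟨n, hn⟩ := he t
  have hdist : dist x (c t) < ε / 4 := by
    rw [Prod.dist_eq]
    have h1 : dist x.1 ((a : ℝ)) < ε / 4 := by
      rw [Real.dist_eq, abs_lt]; constructor <;> linarith
    have h2 : dist x.2 ((b : ℝ)) < ε / 4 := by
      rw [Real.dist_eq, abs_lt]; constructor <;> linarith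
    exact max_lt h1 h2
  have hxball : x ∈ Metric.ball (c t) ((ρ : ℝ)) := by
    rw [Metric.mem_ball]
    calc dist x (c t) < ε / 4 := hdist
      _ < ρ := hρ1
  have hsub : Metric.ball (c t) ((ρ : ℝ)) ⊆ Metric.ball x ε := by
    apply Metric.ball_subset_ball'
    have : dist (c t) x < ε / 4 := by rw [dist_comm]; exact hdist
    linarith
  have hTn : T n = H ∩ Metric.ball (c t) ((ρ : ℝ)) := by
    rw [hT]; simp only [hn]; rfl
  have hTinf : (T n).Infinite := by
    rw [hTn]
    exact acc_inter_infinite hacc (Metric.isOpen_ball.mem_nhds hxball)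
  obtain ⟨h1, h2⟩ := hf n hTinf
  constructor
  · refine h1.mono ?_
    rintro q ⟨hq, hfq⟩
    rw [hTn] at hq
    exact ⟨⟨hq.1, hsub hq.2⟩, hfq⟩
  · refine h2.mono ?_
    rintro q ⟨hq, hfq⟩
    rw [hTn] at hq
    exact ⟨⟨hq.1, hsub hq.2⟩, hfq⟩
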